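/- Let q = p^k with p prime and k ≥ 1, let s ≥ 1 be an integer, and let e_1, …, e_s be distinct non-negative integers. Then the number S_{e_1,…,e_s}(q) of dynamical-equivalence classes among the maps F_q → F_q of the form x ↦ a_1 x^{e_1} + … + a_s x^{e_s} with a_1, …, a_s ∈ F_q^* satisfies, as an inequality of rational numbers, S_{e_1,…,e_s}(q) ≤ Σ_{e | k} (μ(e)/e) · Σ_{d | k/e} (p^d − 1)^s / d, where μ is the Möbius function and the sums range over positive divisors. -/

import Mathlib

/-- Two self-maps `f g : α → α` are dynamically equivalent if there is a bijection
`σ : α → α` with `σ⁻¹ ∘ g ∘ σ = f`. -/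
def DynEquiv {α : Type*} (f g : α → α) : Prop :=
  ∃ σ : Equiv.Perm α, ∀ x, σ.symm (g (σ x)) = f x

/-- The number of dynamical-equivalence classes represented by the elements of a set `S`
of self-maps. -/
noncomputable def numDynClasses {α : Type*} (S : Set (α → α)) : ℕ :=
  Nat.card (Quot (fun f g : S => DynEquiv f.1 g.1))

/-- gcd of `p^m - 1` and `p^n - 1`. -/
lemma my_gcd_pow_sub_one (p : ℕ) (hp : 1 < p) :
    ∀ m n : ℕ, Nat.gcd (p ^ m - 1) (p ^ n - 1) = p ^ Nat.gcd m n - 1 := by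
  intro m
  induction m using Nat.strong_induction_on with
  | _ m ih =>
    intro n
    rcases Nat.eq_zero_or_pos m with rfl | hm
    · simp
    · have hp0 : 0 < p := by omega
      have hpow1 : ∀ r : ℕ, 1 ≤ p ^ r := fun r => Nat.one_le_pow _ _ hp0
      -- p^n ≡ p^(n % m) mod (p^m - 1)
      have h1 : p ^ n ≡ p ^ (n % m) [MOD p ^ m - 1] := by
        conv_lhs => rw [← Nat.div_add_mod n m]
        rw [pow_add, pow_mul]
        have h2 : (p ^ m) ^ (n / m) ≡ 1 ^ (n / m) [MOD p ^ m - 1] := by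
          apply Nat.ModEq.pow
          have : p ^ m - 1 + 1 = p ^ m := Nat.sub_add_cancel (hpow1 m)
          calc p ^ m = p ^ m - 1 + 1 := this.symm
            _ ≡ 0 + 1 [MOD p ^ m - 1] := Nat.ModEq.add_right 1 (Nat.modEq_zero_iff_dvd.mpr dvd_rfl)
            _ = 1 := by ring
        calc (p ^ m) ^ (n / m) * p ^ (n % m) ≡ 1 ^ (n / m) * p ^ (n % m) [MOD p ^ m - 1] :=
              h2.mul_right _
          _ = p ^ (n % m) := by ring
      have h2 : p ^ n - 1 ≡ p ^ (n % m) - 1 [MOD p ^ m - 1] := by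
        apply Nat.ModEq.add_right_cancel' 1
        rwa [Nat.sub_add_cancel (hpow1 n), Nat.sub_add_cancel (hpow1 (n % m))]
      calc Nat.gcd (p ^ m - 1) (p ^ n - 1)
          = Nat.gcd ((p ^ n - 1) % (p ^ m - 1)) (p ^ m - 1) := Nat.gcd_rec _ _
        _ = Nat.gcd ((p ^ (n % m) - 1) % (p ^ m - 1)) (p ^ m - 1) := by rw [h2]
        _ = Nat.gcd (p ^ m - 1) (p ^ (n % m) - 1) := (Nat.gcd_rec _ _).symm
        _ = Nat.gcd (p ^ (n % m) - 1) (p ^ m - 1) := Nat.gcd_comm _ _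
        _ = p ^ Nat.gcd (n % m) m - 1 := ih _ (Nat.mod_lt _ hm) m
        _ = p ^ Nat.gcd m n - 1 := by rw [← Nat.gcd_rec]

/-- The number of solutions of `x ^ t = 1` in the units of a finite field. -/
lemma my_card_pow_eq_one (F : Type*) [Field F] [Fintype F] (t : ℕ) :
    Nat.card {x : Fˣ // x ^ t = 1} = Nat.gcd t (Fintype.card F - 1) := by
  classical
  have hcardu : Fintype.card Fˣ = Fintype.card F - 1 := Fintype.card_units F
  set n := Fintype.card Fˣ with hn
  have hn0 : 0 < n := Fintype.card_pos
  set t' := Nat.gcd t n with ht'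
  have ht'0 : 0 < t' := Nat.gcd_pos_of_pos_right _ hn0
  have ht'dvd : t' ∣ n := Nat.gcd_dvd_right t n
  -- reduce to t'
  have e1 : {x : Fˣ // x ^ t = 1} ≃ {x : Fˣ // x ^ t' = 1} :=
    Equiv.subtypeEquivRight fun x =>
      ⟨fun h => pow_gcd_eq_one.mpr ⟨h, pow_card_eq_one⟩, fun h => (pow_gcd_eq_one.mp h).1⟩
  rw [Nat.card_congr e1]
  -- card = t'
  have hub : Nat.card {x : Fˣ // x ^ t' = 1} ≤ t' := by
    rw [Nat.card_eq_fintype_card, Fintype.card_subtype]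
    calc (Finset.univ.filter fun x : Fˣ => x ^ t' = 1).card
        ≤ Multiset.card (Polynomial.nthRoots t' ((Units.coeHom F) 1)) :=
          card_nthRoots_subgroup_units (Units.coeHom F) (fun _ _ h => Units.ext h) ht'0 1
      _ ≤ t' := Polynomial.card_nthRoots t' _
  have hlb : t' ≤ Nat.card {x : Fˣ // x ^ t' = 1} := by
    obtain ⟨g, hg⟩ := IsCyclic.exists_ofOrder_eq_natCard (α := Fˣ)
    rw [Nat.card_eq_fintype_card] at hg
    set ζ := g ^ (n / t') with hζ
    have hord : orderOf ζ = t' := by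
      rw [hζ, orderOf_pow, hg, Nat.gcd_eq_right (Nat.div_dvd_of_dvd ht'dvd),
        Nat.div_div_self ht'dvd hn0.ne']
    have hζpow : ζ ^ t' = 1 := by rw [← hord]; exact pow_orderOf_eq_one ζ
    have : Function.Injective (fun h : Subgroup.zpowers ζ =>
        (⟨h.1, by
          obtain ⟨i, hi⟩ := h.2
          rw [← hi]
          show (ζ ^ i) ^ (t' : ℕ) = 1
          rw [← zpow_natCast, ← zpow_mul, mul_comm, zpow_mul, zpow_natCast, hζpow, one_zpow]⟩ : {x : Fˣ // x ^ t' = 1})) := by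
      intro a b hab
      have : (a : Fˣ) = (b : Fˣ) := congrArg (fun z : {x : Fˣ // x ^ t' = 1} => z.1) hab
      exact Subtype.ext this
    calc t' = Fintype.card (Subgroup.zpowers ζ) := (Fintype.card_zpowers.trans hord).symm
      _ ≤ Fintype.card {x : Fˣ // x ^ t' = 1} := Fintype.card_le_of_injective _ this
      _ = Nat.card _ := (Nat.card_eq_fintype_card).symm
  have : Nat.card {x : Fˣ // x ^ t' = 1} = t' := le_antisymm hub hlb
  rw [this, ht']; exact congrArg (Nat.gcd t) hcardu

open Finset

/-- Swap a double divisor sum. -/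
lemma my_divisor_sum_swap {M : Type*} [AddCommMonoid M] (n : ℕ) (f : ℕ → ℕ → M) :
    ∑ u ∈ n.divisors, ∑ d ∈ (n / u).divisors, f u d =
      ∑ d ∈ n.divisors, ∑ u ∈ (n / d).divisors, f u d := by
  rw [Finset.sum_sigma', Finset.sum_sigma']
  refine Finset.sum_nbij' (fun x => ⟨x.2, x.1⟩) (fun x => ⟨x.2, x.1⟩) ?_ ?_ ?_ ?_ ?_
  · rintro ⟨u, d⟩ h
    simp only [Finset.mem_sigma, Nat.mem_divisors] at h ⊢
    obtain ⟨⟨hu, hn0⟩, hd, -⟩ := h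
    have hud : u * d ∣ n := (Nat.dvd_div_iff_mul_dvd hu).mp hd
    have hdn : d ∣ n := (dvd_mul_left d u).trans hud
    refine ⟨⟨hdn, hn0⟩, (Nat.dvd_div_iff_mul_dvd hdn).mpr (by rwa [mul_comm]), ?_⟩
    exact Nat.div_ne_zero_iff_of_dvd hdn |>.mpr ⟨hn0, by rintro rfl; simp at hdn; omega⟩
  · rintro ⟨u, d⟩ h
    simp only [Finset.mem_sigma, Nat.mem_divisors] at h ⊢
    obtain ⟨⟨hu, hn0⟩, hd, -⟩ := h
    have hud : u * d ∣ n := (Nat.dvd_div_iff_mul_dvd hu).mp hd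
    have hdn : d ∣ n := (dvd_mul_left d u).trans hud
    refine ⟨⟨hdn, hn0⟩, (Nat.dvd_div_iff_mul_dvd hdn).mpr (by rwa [mul_comm]), ?_⟩
    exact Nat.div_ne_zero_iff_of_dvd hdn |>.mpr ⟨hn0, by rintro rfl; simp at hdn; omega⟩
  · rintro ⟨u, d⟩ _; rfl
  · rintro ⟨u, d⟩ _; rfl
  · rintro ⟨u, d⟩ _; rfl

/-- `∑_{u ∣ m} μ(u)/u = φ(m)/m` over `ℚ`. -/
lemma my_moebius_div (m : ℕ) (hm : 0 < m) :
    ∑ u ∈ m.divisors, (ArithmeticFunction.moebius u : ℚ) / u = (Nat.totient m : ℚ) / m := by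
  have hinv : ∀ n > 0, ∑ x ∈ n.divisorsAntidiagonal,
      (ArithmeticFunction.moebius x.1 : ℚ) * (x.2 : ℚ) = (Nat.totient n : ℚ) := by
    rw [← ArithmeticFunction.sum_eq_iff_sum_mul_moebius_eq]
    intro n hn
    rw [← Nat.cast_sum]
    exact_mod_cast congrArg (Nat.cast (R := ℚ)) (Nat.sum_totient n)
  have key := hinv m hm
  have : ∑ u ∈ m.divisors, (ArithmeticFunction.moebius u : ℚ) / u =
      ∑ x ∈ m.divisorsAntidiagonal, (ArithmeticFunction.moebius x.1 : ℚ) * (x.2 : ℚ) / m := by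
    rw [Nat.sum_divisorsAntidiagonal
      (fun u v => (ArithmeticFunction.moebius u : ℚ) * (v : ℚ) / m)]
    refine Finset.sum_congr rfl fun u hu => ?_
    obtain ⟨hud, hm0⟩ := Nat.mem_divisors.mp hu
    have hu0 : (u : ℚ) ≠ 0 := by
      have := Nat.pos_of_mem_divisors hu
      exact_mod_cast this.ne'
    have hmq : (m : ℚ) ≠ 0 := by exact_mod_cast hm.ne'
    have : ((m / u : ℕ) : ℚ) = (m : ℚ) / u := by
      rw [Nat.cast_div hud hu0]
    rw [this]
    field_simp
  rw [this, ← Finset.sum_div, key]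


theorem stmt2 {F : Type*} [Field F] [Fintype F] (p k : ℕ) [Fact p.Prime] (hk : 1 ≤ k)
    (hq : Fintype.card F = p ^ k)
    (s : ℕ) (hs : 1 ≤ s) (e : Fin s → ℕ) (he : Function.Injective e) :
    (numDynClasses {f : F → F | ∃ a : Fin s → Fˣ, f = fun x => ∑ i, (a i : F) * x ^ (e i)} : ℚ) ≤
      ∑ u ∈ k.divisors, ((ArithmeticFunction.moebius u : ℚ) / u) *
        ∑ d ∈ (k / u).divisors, ((p : ℚ) ^ d - 1) ^ s / d := by
  classical
  have hp : p.Prime := Fact.out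
  have hp1 : 1 < p := hp.one_lt
  haveI : NeZero k := ⟨by omega⟩
  -- the characteristic of F is p
  haveI hchar : CharP F p := by
    obtain ⟨n, hrc, hcard⟩ := FiniteField.card F (ringChar F)
    have hdvd : p ∣ ringChar F := hp.dvd_of_dvd_pow (n := (n : ℕ))
      (by rw [← hcard, hq]; exact dvd_pow_self p (by omega))
    have : p = ringChar F := (Nat.prime_dvd_prime_iff_eq hp hrc).mp hdvd
    rw [this]; exact ringChar.charP F
  -- basic facts about units
  have hFq1 : Fintype.card Fˣ = p ^ k - 1 := by rw [Fintype.card_units, hq]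
  have hu : ∀ x : Fˣ, x ^ (p ^ k) = x := by
    intro x
    have h1 : x ^ (p ^ k - 1) = 1 := by rw [← hFq1]; exact pow_card_eq_one
    have h2 : p ^ k - 1 + 1 = p ^ k := Nat.sub_add_cancel (Nat.one_le_pow _ _ hp.pos)
    calc x ^ (p ^ k) = x ^ (p ^ k - 1 + 1) := by rw [h2]
      _ = x ^ (p ^ k - 1) * x := pow_succ x _
      _ = x := by rw [h1, one_mul]
  have hiter : ∀ (j : ℕ) (x : Fˣ), x ^ ((p ^ k) ^ j) = x := by
    intro j
    induction j with
    | zero => intro x; simp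
    | succ j ihj => intro x; rw [pow_succ, pow_mul, ihj, hu]
  have hmod : ∀ (x : Fˣ) (m : ℕ), x ^ p ^ (m % k) = x ^ p ^ m := by
    intro x m
    conv_rhs => rw [← Nat.div_add_mod m k, pow_add, pow_mul, pow_mul, hiter (m / k) x]
  -- the action of `ZMod k` on coefficient tuples by Frobenius
  letI act : MulAction (Multiplicative (ZMod k)) (Fin s → Fˣ) :=
    { smul := fun g a i => a i ^ p ^ (Multiplicative.toAdd g).val
      one_smul := fun a => by
        funext i
        show a i ^ p ^ (Multiplicative.toAdd (1 : Multiplicative (ZMod k))).val = a i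
        simp
      mul_smul := fun g h a => by
        funext i
        show a i ^ p ^ (Multiplicative.toAdd (g * h)).val
            = (a i ^ p ^ (Multiplicative.toAdd h).val) ^ p ^ (Multiplicative.toAdd g).val
        rw [← pow_mul, ← pow_add]
        have hgh : Multiplicative.toAdd (g * h)
            = Multiplicative.toAdd g + Multiplicative.toAdd h := rfl
        rw [hgh, ZMod.val_add, hmod, add_comm ((Multiplicative.toAdd g).val)] }
  haveI instfix : ∀ g : Multiplicative (ZMod k),
      Fintype (MulAction.fixedBy (Fin s → Fˣ) g) := fun g => Fintype.ofFinite _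
  haveI instΩ : Fintype
      (Quotient (MulAction.orbitRel (Multiplicative (ZMod k)) (Fin s → Fˣ))) :=
    Fintype.ofFinite _
  -- Burnside
  have burnside := MulAction.sum_card_fixedBy_eq_card_orbits_mul_card_group
    (Multiplicative (ZMod k)) (Fin s → Fˣ)
  have hcardG : Fintype.card (Multiplicative (ZMod k)) = k := by
    rw [Fintype.card_multiplicative, ZMod.card]
  -- count the fixed points of each group element
  have hfix : ∀ g : Multiplicative (ZMod k),
      Fintype.card (MulAction.fixedBy (Fin s → Fˣ) g)
        = (p ^ Nat.gcd (Multiplicative.toAdd g).val k - 1) ^ s := by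
    intro g
    set m := (Multiplicative.toAdd g).val with hm
    have h1 : ∀ x : Fˣ, (x ^ p ^ m = x ↔ x ^ (p ^ m - 1) = 1) := by
      intro x
      have h2 : p ^ m = p ^ m - 1 + 1 := (Nat.sub_add_cancel (Nat.one_le_pow _ _ hp.pos)).symm
      constructor
      · intro hx
        rw [h2, pow_succ, mul_eq_right] at hx
        exact hx
      · intro hx
        rw [h2, pow_succ, hx, one_mul]
    have e1 : (MulAction.fixedBy (Fin s → Fˣ) g) ≃
        ∀ _ : Fin s, {x : Fˣ // x ^ (p ^ m - 1) = 1} := by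
      refine Equiv.trans (Equiv.subtypeEquivRight ?_)
        (Equiv.subtypePiEquivPi (p := fun (_ : Fin s) (x : Fˣ) => x ^ (p ^ m - 1) = 1))
      intro a
      rw [MulAction.mem_fixedBy]
      show g • a = a ↔ ∀ i, (a i) ^ (p ^ m - 1) = 1
      rw [funext_iff]
      exact forall_congr' fun i => h1 (a i)
    have h3 : Nat.card (∀ _ : Fin s, {x : Fˣ // x ^ (p ^ m - 1) = 1})
        = (p ^ Nat.gcd m k - 1) ^ s := by
      rw [Nat.card_pi]
      have hc : Nat.card {x : Fˣ // x ^ (p ^ m - 1) = 1} = p ^ Nat.gcd m k - 1 := by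
        rw [my_card_pow_eq_one F (p ^ m - 1), hq, my_gcd_pow_sub_one p hp1 m k]
      simp only [Finset.prod_const, Finset.card_univ, Fintype.card_fin]
      rw [hc]
    rw [← Nat.card_eq_fintype_card, Nat.card_congr e1, h3]
  -- total the fixed-point counts
  have hsum : (∑ g : Multiplicative (ZMod k),
      Fintype.card (MulAction.fixedBy (Fin s → Fˣ) g))
      = ∑ d ∈ k.divisors, Nat.totient (k / d) * (p ^ d - 1) ^ s := by
    calc (∑ g : Multiplicative (ZMod k), Fintype.card (MulAction.fixedBy (Fin s → Fˣ) g))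
        = ∑ g : Multiplicative (ZMod k),
            (p ^ Nat.gcd (Multiplicative.toAdd g).val k - 1) ^ s :=
          Finset.sum_congr rfl fun g _ => hfix g
      _ = ∑ j : ZMod k, (p ^ Nat.gcd j.val k - 1) ^ s :=
          Fintype.sum_equiv Multiplicative.toAdd _ _ (fun g => rfl)
      _ = ∑ i ∈ Finset.range k, (p ^ Nat.gcd i k - 1) ^ s := by
          refine Finset.sum_bij' (fun (j : ZMod k) _ => j.val)
            (fun i _ => (i : ZMod k)) ?_ ?_ ?_ ?_ ?_
          · intro j _; exact Finset.mem_range.mpr (ZMod.val_lt j)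
          · intro i _; exact Finset.mem_univ _
          · intro j _; exact ZMod.natCast_rightInverse j
          · intro i hi; exact ZMod.val_cast_of_lt (Finset.mem_range.mp hi)
          · intro j _; rfl
      _ = ∑ i ∈ Finset.range k, (p ^ Nat.gcd k i - 1) ^ s := by
          simp_rw [Nat.gcd_comm]
      _ = ∑ d ∈ k.divisors, ∑ i ∈ Finset.range k with Nat.gcd k i = d,
            (p ^ Nat.gcd k i - 1) ^ s :=
          (Finset.sum_fiberwise_of_maps_to
            (fun i _ => Nat.mem_divisors.mpr ⟨Nat.gcd_dvd_left k i, by omega⟩) _).symm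
      _ = ∑ d ∈ k.divisors, Nat.totient (k / d) * (p ^ d - 1) ^ s := by
          refine Finset.sum_congr rfl fun d hd => ?_
          obtain ⟨hdvd, hk0⟩ := Nat.mem_divisors.mp hd
          calc (∑ i ∈ Finset.range k with Nat.gcd k i = d, (p ^ Nat.gcd k i - 1) ^ s)
              = ∑ i ∈ Finset.range k with Nat.gcd k i = d, (p ^ d - 1) ^ s := by
                refine Finset.sum_congr rfl fun i hi => ?_
                rw [(Finset.mem_filter.mp hi).2]
            _ = (Finset.range k |>.filter fun i => Nat.gcd k i = d).card • (p ^ d - 1) ^ s :=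
                Finset.sum_const _
            _ = Nat.totient (k / d) * (p ^ d - 1) ^ s := by
                rw [← Nat.totient_div_of_dvd hdvd, smul_eq_mul]
  -- the map from coefficient tuples to dynamical classes
  set S : Set (F → F) := {f : F → F | ∃ a : Fin s → Fˣ, f = fun x => ∑ i, (a i : F) * x ^ (e i)}
    with hS
  let rel : S → S → Prop := fun f g => DynEquiv f.1 g.1
  let fmap : (Fin s → Fˣ) → S := fun a => ⟨fun x => ∑ i, (a i : F) * x ^ (e i), ⟨a, rfl⟩⟩
  let mq : (Fin s → Fˣ) → Quot rel := fun a => Quot.mk rel (fmap a)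
  -- the Frobenius as a permutation of F
  have hfrobbij : Function.Bijective (frobenius F p) :=
    Finite.injective_iff_bijective.mp (frobenius F p).injective
  let σ : Equiv.Perm F := Equiv.ofBijective _ hfrobbij
  have hσ : ∀ y : F, σ y = frobenius F p y := fun y => rfl
  have hstep : ∀ b : Fin s → Fˣ, mq b = mq (fun i => b i ^ p) := by
    intro b
    apply Quot.sound
    show DynEquiv (fmap b).1 (fmap fun i => b i ^ p).1
    refine ⟨σ, fun x => ?_⟩
    rw [Equiv.symm_apply_eq]
    show ∑ i, ((b i ^ p : Fˣ) : F) * (σ x) ^ (e i) = σ (∑ i, (b i : F) * x ^ (e i))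
    calc ∑ i, ((b i ^ p : Fˣ) : F) * (σ x) ^ (e i)
        = ∑ i, frobenius F p ((b i : F) * x ^ (e i)) := by
          refine Finset.sum_congr rfl fun i _ => ?_
          rw [map_mul, map_pow, Units.val_pow_eq_pow_val, hσ]
          simp [frobenius_def]
      _ = frobenius F p (∑ i, (b i : F) * x ^ (e i)) := (map_sum _ _ _).symm
      _ = σ (∑ i, (b i : F) * x ^ (e i)) := (hσ _).symm
  have hpow : ∀ (j : ℕ) (a : Fin s → Fˣ), mq (fun i => a i ^ p ^ j) = mq a := by
    intro j
    induction j with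
    | zero =>
      intro a
      exact congrArg mq (funext fun i => by rw [pow_zero, pow_one])
    | succ j ihj =>
      intro a
      have h4 : (fun i => a i ^ p ^ (j + 1)) = (fun i => (a i ^ p ^ j) ^ p) :=
        funext fun i => by rw [← pow_mul, pow_succ]
      rw [h4]
      exact (hstep (fun i => a i ^ p ^ j)).symm.trans (ihj a)
  -- descend to a surjection from orbits onto dynamical classes
  let M : Quotient (MulAction.orbitRel (Multiplicative (ZMod k)) (Fin s → Fˣ)) → Quot rel :=
    Quotient.lift mq (by
      intro a b hab
      obtain ⟨g, hg⟩ := MulAction.mem_orbit_iff.mp hab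
      rw [← hg]
      exact hpow ((Multiplicative.toAdd g).val) b)
  have hMsurj : Function.Surjective M := by
    intro x
    induction x using Quot.ind with
    | _ f =>
      obtain ⟨a, ha⟩ := f.2
      exact ⟨Quotient.mk _ a, congrArg (Quot.mk rel) (Subtype.ext ha.symm)⟩
  have hcardle : numDynClasses S ≤
      Fintype.card (Quotient (MulAction.orbitRel (Multiplicative (ZMod k)) (Fin s → Fˣ))) := by
    calc numDynClasses S = Nat.card (Quot rel) := rfl
      _ ≤ Nat.card (Quotient (MulAction.orbitRel (Multiplicative (ZMod k)) (Fin s → Fˣ))) :=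
          Nat.card_le_card_of_surjective M hMsurj
      _ = Fintype.card _ := Nat.card_eq_fintype_card
  -- the key counting identity
  have hkey : (∑ d ∈ k.divisors, Nat.totient (k / d) * (p ^ d - 1) ^ s) =
      Fintype.card (Quotient (MulAction.orbitRel (Multiplicative (ZMod k)) (Fin s → Fˣ))) * k := by
    rw [← hsum, burnside, hcardG]
  -- rewrite the right-hand side
  have hk0 : (k : ℚ) ≠ 0 := by positivity
  have hRHS : (∑ u ∈ k.divisors, ((ArithmeticFunction.moebius u : ℚ) / u) *
        ∑ d ∈ (k / u).divisors, ((p : ℚ) ^ d - 1) ^ s / d)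
      = (Fintype.card
          (Quotient (MulAction.orbitRel (Multiplicative (ZMod k)) (Fin s → Fˣ))) : ℚ) := by
    calc (∑ u ∈ k.divisors, ((ArithmeticFunction.moebius u : ℚ) / u) *
          ∑ d ∈ (k / u).divisors, ((p : ℚ) ^ d - 1) ^ s / d)
        = ∑ u ∈ k.divisors, ∑ d ∈ (k / u).divisors,
            ((ArithmeticFunction.moebius u : ℚ) / u) * (((p : ℚ) ^ d - 1) ^ s / d) := by
          simp_rw [Finset.mul_sum]
      _ = ∑ d ∈ k.divisors, ∑ u ∈ (k / d).divisors,
            ((ArithmeticFunction.moebius u : ℚ) / u) * (((p : ℚ) ^ d - 1) ^ s / d) :=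
          my_divisor_sum_swap k _
      _ = ∑ d ∈ k.divisors, (∑ u ∈ (k / d).divisors,
            (ArithmeticFunction.moebius u : ℚ) / u) * (((p : ℚ) ^ d - 1) ^ s / d) := by
          simp_rw [Finset.sum_mul]
      _ = ∑ d ∈ k.divisors,
            ((Nat.totient (k / d) : ℚ) * ((p : ℚ) ^ d - 1) ^ s) / k := by
          refine Finset.sum_congr rfl fun d hd => ?_
          obtain ⟨hdvd, hk0'⟩ := Nat.mem_divisors.mp hd
          have hkd0 : 0 < k / d := Nat.div_pos (Nat.le_of_dvd (by omega) hdvd)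
            (Nat.pos_of_dvd_of_pos hdvd (by omega))
          rw [my_moebius_div (k / d) hkd0]
          have hd0 : (d : ℚ) ≠ 0 := by
            have := Nat.pos_of_dvd_of_pos hdvd (by omega)
            exact_mod_cast this.ne'
          have hkd0' : ((k / d : ℕ) : ℚ) ≠ 0 := by exact_mod_cast hkd0.ne'
          have hmul : ((k / d : ℕ) : ℚ) * (d : ℚ) = (k : ℚ) := by
            rw [← Nat.cast_mul, Nat.div_mul_cancel hdvd]
          field_simp
          rw [← hmul]
          ring
      _ = (((∑ d ∈ k.divisors, Nat.totient (k / d) * (p ^ d - 1) ^ s : ℕ)) : ℚ) / k := by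
          rw [Nat.cast_sum, Finset.sum_div]
          refine Finset.sum_congr rfl fun d _ => ?_
          have hcast : ((p : ℚ) ^ d - 1) ^ s = (((p ^ d - 1) ^ s : ℕ) : ℚ) := by
            rw [Nat.cast_pow, Nat.cast_sub (Nat.one_le_pow _ _ hp.pos), Nat.cast_pow,
              Nat.cast_one]
          rw [Nat.cast_mul, hcast]
      _ = ((Fintype.card
            (Quotient (MulAction.orbitRel (Multiplicative (ZMod k)) (Fin s → Fˣ))) * k : ℕ) : ℚ)
            / k := by rw [hkey]
      _ = (Fintype.card
            (Quotient (MulAction.orbitRel (Multiplicative (ZMod k)) (Fin s → Fˣ))) : ℚ) := by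
          rw [Nat.cast_mul]
          field_simp
  rw [hRHS]
  exact_mod_cast hcardle
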